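/- Let Γ = (V, E) be a chordal graph with perfect elimination ordering and let v be the maximal vertex. Then every nbc set S of Γ decomposes uniquely as S = S' ∪ S'' where S' is an nbc set of Γ − v and S'' is either empty or a single edge with h(e) = v. Consequently, if N(Γ) denotes the number of nbc sets of Γ and deg(v) the degree of v, then N(Γ) = N(Γ − v) · (1 + deg(v)). -/

import Mathlib

open SimpleGraph

section Defs

variable {V : Type*}

/-- The larger endpoint (head) of an edge, with respect to a linear order on vertices. -/
def esup [LinearOrder V] (e : Sym2 V) : V :=
  Sym2.lift ⟨fun a b => a ⊔ b, fun a b => sup_comm a b⟩ e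

/-- The smaller endpoint (tail) of an edge. -/
def einf [LinearOrder V] (e : Sym2 V) : V :=
  Sym2.lift ⟨fun a b => a ⊓ b, fun a b => inf_comm a b⟩ e

/-- The order on edges induced by a linear order on vertices:
`e < e'` iff `h(e) < h(e')`, or `h(e) = h(e')` and `t(e) < t(e')`. -/
def edgeLT [LinearOrder V] (e f : Sym2 V) : Prop :=
  esup e < esup f ∨ (esup e = esup f ∧ einf e < einf f)

/-- The linear order on the vertices is a perfect elimination ordering: every vertex is
simplicial in the induced subgraph on the vertices below it. -/
def IsPEO [LinearOrder V] (G : SimpleGraph V) : Prop :=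
  ∀ v u w : V, u < v → w < v → u ≠ w → G.Adj u v → G.Adj w v → G.Adj u w

/-- A cycle (walk) in a graph has a chord. -/
def SimpleGraph.Walk.HasChord {G : SimpleGraph V} {v : V} (c : G.Walk v v) : Prop :=
  ∃ a b : V, a ∈ c.support ∧ b ∈ c.support ∧ G.Adj a b ∧ s(a, b) ∉ c.edges

/-- A graph is chordal if every cycle with more than three vertices has a chord. -/
def SimpleGraph.IsChordal (G : SimpleGraph V) : Prop :=
  ∀ (v : V) (c : G.Walk v v), c.IsCycle → 3 < c.length → c.HasChord

/-- `S` is the edge set of a cycle of `G`. -/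
def IsCycleEdges [DecidableEq V] (G : SimpleGraph V) (S : Finset (Sym2 V)) : Prop :=
  ∃ (v : V) (c : G.Walk v v), c.IsCycle ∧ c.edges.toFinset = S

/-- `S` is a broken circuit: there is an edge `e` smaller than every element of `S` such that
`S ∪ {e}` is the edge set of a cycle. -/
def IsBrokenCircuit [LinearOrder V] (G : SimpleGraph V) (S : Finset (Sym2 V)) : Prop :=
  ∃ e : Sym2 V, e ∉ S ∧ (∀ f ∈ S, edgeLT e f) ∧ IsCycleEdges G (insert e S)

/-- `S` is an nbc set: a set of edges of `G` no subset of which is a broken circuit. -/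
def IsNBC [LinearOrder V] (G : SimpleGraph V) (S : Finset (Sym2 V)) : Prop :=
  ↑S ⊆ G.edgeSet ∧ ∀ T ⊆ S, ¬IsBrokenCircuit G T

end Defs

/-- The collection of all nbc sets of `G`. -/
noncomputable def nbcFinset {V : Type*} [Fintype V] [LinearOrder V] (G : SimpleGraph V) :
    Finset (Finset (Sym2 V)) :=
  @Finset.filter _ (IsNBC G) (Classical.decPred _) Finset.univ


section H
variable {V : Type*} [LinearOrder V]

lemma esup_mk (a b : V) : esup s(a, b) = a ⊔ b := rfl
lemma einf_mk (a b : V) : einf s(a, b) = a ⊓ b := rfl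

lemma esup_mem (e : Sym2 V) : esup e ∈ e := by
  induction e using Sym2.inductionOn with
  | hf a b => rcases le_total a b with h | h <;> simp [esup_mk, h, sup_of_le_left, sup_of_le_right, max_eq_left, max_eq_right]

lemma einf_mem (e : Sym2 V) : einf e ∈ e := by
  induction e using Sym2.inductionOn with
  | hf a b => rcases le_total a b with h | h <;> simp [einf_mk, h, inf_of_le_left, inf_of_le_right, min_eq_left, min_eq_right]

lemma mk_einf_esup (e : Sym2 V) : s(einf e, esup e) = e := by
  induction e using Sym2.inductionOn with
  | hf a b =>
    rcases le_total a b with h | h <;>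
      simp [einf_mk, esup_mk, inf_of_le_left, inf_of_le_right, sup_of_le_left, sup_of_le_right, min_eq_left, min_eq_right,
        max_eq_left, max_eq_right, h, Sym2.eq_swap]

lemma einf_lt_esup {e : Sym2 V} (h : ¬e.IsDiag) : einf e < esup e := by
  induction e using Sym2.inductionOn with
  | hf a b =>
    simp only [Sym2.isDiag_iff_proj_eq] at h
    exact inf_lt_sup.mpr h

lemma esup_eq_of_mem_of_le {e : Sym2 V} {m : V} (hm : m ∈ e) (hle : ∀ x ∈ e, x ≤ m) :
    esup e = m := by
  induction e using Sym2.inductionOn with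
  | hf a b =>
    rw [Sym2.mem_iff] at hm
    have ha := hle a (by simp)
    have hb := hle b (by simp)
    rcases hm with rfl | rfl <;> simp [esup_mk, sup_of_le_left, sup_of_le_right, max_eq_left, max_eq_right, ha, hb]

end H
section W
variable {V : Type*} {G : SimpleGraph V}

open SimpleGraph Walk

lemma end_mem_support_tail {u w : V} (p : G.Walk u w) (h : 0 < p.length) :
    w ∈ p.support.tail := by
  induction p with
  | nil => simp at h
  | cons h' q ih =>
    simp only [Walk.support_cons, List.tail_cons]
    cases q with
    | nil => simp
    | cons h'' r => exact Walk.end_mem_support _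

lemma exists_last_edge {u w : V} (p : G.Walk u w) (h : 0 < p.length) :
    ∃ a, s(a, w) ∈ p.edges := by
  induction p with
  | nil => simp at h
  | cons h' q ih =>
    cases q with
    | nil => exact ⟨_, List.Mem.head _⟩
    | cons h'' r =>
      obtain ⟨a, ha⟩ := ih (by simp)
      exact ⟨a, List.mem_cons_of_mem _ ha⟩

/-- In a cycle based at `m`, there are two distinct edges containing `m` and an edge
not containing `m`. -/
lemma cycle_edges_at_base {m : V} (d : G.Walk m m) (hd : d.IsCycle) :
    ∃ e₁ e₂ g, e₁ ∈ d.edges ∧ e₂ ∈ d.edges ∧ g ∈ d.edges ∧ e₁ ≠ e₂ ∧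
      m ∈ e₁ ∧ m ∈ e₂ ∧ m ∉ g := by
  have hlen := hd.three_le_length
  have hedges : d.edges.Nodup := hd.edges_nodup
  have hsupp : d.support.tail.Nodup := hd.support_nodup
  cases d with
  | nil => simp at hlen
  | cons h tl =>
    rename_i b
    have hbm : b ≠ m := fun hbm => by subst hbm; exact G.irrefl h
    have htl_len : 2 ≤ tl.length := by simpa using hlen
    cases tl with
    | nil => simp at htl_len
    | cons h2 tl2 =>
      rename_i b2
      obtain ⟨a, ha⟩ : ∃ a, s(a, m) ∈ (Walk.cons h2 tl2).edges :=
        exists_last_edge _ (by simp)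
      refine ⟨s(m, b), s(a, m), s(b, b2), by simp, List.mem_cons_of_mem _ ha,
        by simp, ?_, by simp, by simp, ?_⟩
      · intro hEq
        simp only [Walk.edges_cons, List.nodup_cons] at hedges
        rw [hEq] at hedges
        exact hedges.1 ha
      · simp only [Sym2.mem_iff]
        rintro (rfl | rfl)
        · exact hbm rfl
        · have h1 : 1 ≤ tl2.length := by
            simp only [Walk.length_cons] at htl_len; omega
          have hm2 : m ∈ tl2.support.tail := end_mem_support_tail tl2 (by omega)
          simp only [Walk.support_cons, List.tail_cons] at hsupp
          simp only [Walk.support_cons, List.nodup_cons] at hsupp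
          have hnodup : tl2.support.Nodup := hsupp.2
          rw [tl2.support_eq_cons] at hnodup
          exact (List.nodup_cons.mp hnodup).1 hm2

end W
section AB
variable {V : Type*} [LinearOrder V] {G : SimpleGraph V}

open SimpleGraph Walk

lemma isNBC_of_injOn {S : Finset (Sym2 V)} (hS : ↑S ⊆ G.edgeSet)
    (hinj : ∀ e ∈ S, ∀ f ∈ S, esup e = esup f → e = f) : IsNBC G S := by
  classical
  refine ⟨hS, ?_⟩
  rintro T hTS ⟨e, heT, hlt, x, c, hc, hedges⟩
  have hpos : 0 < c.support.length := by
    simp [Walk.support_ne_nil, List.length_pos_iff]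
  set m := c.support.maximum_of_length_pos hpos with hm
  have hmem_le : ∀ y ∈ c.support, y ≤ m := fun y hy =>
    List.le_maximum_of_length_pos_of_mem hy hpos
  have hmmem : m ∈ c.support := List.maximum_of_length_pos_mem hpos
  -- rotate the cycle so that it is based at m
  set d := c.rotate m hmmem with hd
  have hdc : d.IsCycle := hc.rotate hmmem
  have hperm : List.Perm d.edges c.edges := (c.rotate_edges m hmmem).perm
  obtain ⟨e₁, e₂, g, he₁, he₂, hg, hne, hme₁, hme₂, hmg⟩ := cycle_edges_at_base d hdc
  -- membership in insert e T
  have hmemT : ∀ f ∈ d.edges, f ∈ insert e T := by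
    intro f hf
    rw [← hedges]
    exact List.mem_toFinset.mpr (hperm.mem_iff.mp hf)
  -- endpoints of cycle edges are ≤ m
  have hend_le : ∀ f ∈ d.edges, ∀ y ∈ f, y ≤ m := by
    intro f hf y hy
    have hfc : f ∈ c.edges := hperm.mem_iff.mp hf
    induction f using Sym2.inductionOn with
    | hf a b =>
      rw [Sym2.mem_iff] at hy
      rcases hy with rfl | rfl
      · exact hmem_le _ (c.fst_mem_support_of_mem_edges hfc)
      · exact hmem_le _ (c.snd_mem_support_of_mem_edges hfc)
  have hesup₁ : esup e₁ = m := esup_eq_of_mem_of_le hme₁ (hend_le _ he₁)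
  have hesup₂ : esup e₂ = m := esup_eq_of_mem_of_le hme₂ (hend_le _ he₂)
  have hesupg : esup g < m := by
    have hle : esup g ≤ m := hend_le _ hg _ (esup_mem g)
    rcases lt_or_eq_of_le hle with h | h
    · exact h
    · exact absurd (h ▸ esup_mem g) hmg
  -- if e is one of the two edges at m, then edgeLT e g fails
  have hcase : ∀ f, f ∈ d.edges → m ∈ f → f = e → False := by
    intro f hf hmf hfe
    have hgT : g ∈ T := by
      rcases Finset.mem_insert.mp (hmemT g hg) with h | h
      · exact absurd (show m ∈ g by rw [h, ← hfe]; exact hmf) hmg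
      · exact h
    have hfm : esup f = m := esup_eq_of_mem_of_le hmf (hend_le _ hf)
    have hlt' := hlt g hgT
    unfold edgeLT at hlt'
    rw [← hfe, hfm] at hlt'
    rcases hlt' with h | ⟨h, -⟩
    · exact absurd h (not_lt_of_gt hesupg)
    · exact absurd h.symm (ne_of_lt hesupg)
  rcases Finset.mem_insert.mp (hmemT e₁ he₁) with h₁ | h₁
  · exact hcase e₁ he₁ hme₁ h₁
  rcases Finset.mem_insert.mp (hmemT e₂ he₂) with h₂ | h₂
  · exact hcase e₂ he₂ hme₂ h₂
  exact hne (hinj e₁ (hTS h₁) e₂ (hTS h₂) (hesup₁.trans hesup₂.symm))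

end AB
section B
variable {V : Type*} [LinearOrder V] {G : SimpleGraph V}

open SimpleGraph Walk

lemma injOn_of_isNBC (hpeo : IsPEO G) {S : Finset (Sym2 V)} (hS : IsNBC G S) :
    ∀ e ∈ S, ∀ f ∈ S, esup e = esup f → e = f := by
  classical
  intro e heS f hfS hsup
  by_contra hne
  -- notation
  set v' := esup e with hv'
  set u := einf e with hu
  set w := einf f with hw
  have heE : e ∈ G.edgeSet := hS.1 heS
  have hfE : f ∈ G.edgeSet := hS.1 hfS
  have heq : s(u, v') = e := mk_einf_esup e
  have hfq : s(w, v') = f := by rw [hsup] at hv' ⊢; exact mk_einf_esup f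
  have huv : u < v' := einf_lt_esup (G.not_isDiag_of_mem_edgeSet heE)
  have hwv : w < v' := by
    have := einf_lt_esup (G.not_isDiag_of_mem_edgeSet hfE)
    rwa [← hsup] at this
  have huw : u ≠ w := by
    intro h; apply hne; rw [← heq, ← hfq, h]
  have hadj_uv : G.Adj u v' := by rw [← SimpleGraph.mem_edgeSet, heq]; exact heE
  have hadj_wv : G.Adj w v' := by rw [← SimpleGraph.mem_edgeSet, hfq]; exact hfE
  have hadj_uw : G.Adj u w := hpeo v' u w huv hwv huw hadj_uv hadj_wv
  -- the triangle
  set t : G.Walk v' v' :=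
    Walk.cons hadj_uv.symm (Walk.cons hadj_uw (Walk.cons hadj_wv Walk.nil)) with ht
  have hunev : u ≠ v' := ne_of_lt huv
  have hwnev : w ≠ v' := ne_of_lt hwv
  have htc : t.IsCycle := by
    rw [Walk.isCycle_def, Walk.isTrail_def]
    refine ⟨?_, by simp [ht], ?_⟩
    · simp only [ht, Walk.edges_cons, Walk.edges_nil]
      simp [Sym2.eq_iff, huw, hunev, hwnev, Ne.symm huw, Ne.symm hunev, Ne.symm hwnev]
    · simp only [ht, Walk.support_cons, Walk.support_nil, List.tail_cons]
      simp [huw, hunev, hwnev]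
  -- the broken circuit {e, f}
  have hbc : IsBrokenCircuit G {e, f} := by
    refine ⟨s(u, w), ?_, ?_, v', t, htc, ?_⟩
    · simp only [Finset.mem_insert, Finset.mem_singleton, ← heq, ← hfq]
      simp [Sym2.eq_iff, huw, hunev, hwnev, Ne.symm huw, Ne.symm hunev, Ne.symm hwnev]
    · intro g hg
      have hgsup : esup g = v' := by
        rcases Finset.mem_insert.mp hg with rfl | hg'
        · rfl
        · rw [Finset.mem_singleton.mp hg', ← hsup]
      unfold edgeLT
      left
      rw [hgsup, esup_mk]
      exact sup_lt_iff.mpr ⟨huv, hwv⟩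
    · rw [ht]
      ext g
      simp only [Walk.edges_cons, Walk.edges_nil, List.toFinset_cons, List.toFinset_nil,
        LawfulSingleton.insert_empty_eq, Finset.mem_insert, Finset.mem_singleton, ← heq, ← hfq]
      constructor
      · rintro (rfl | rfl | rfl)
        · right; left; rw [Sym2.eq_swap]
        · left; rfl
        · right; right; rw [Sym2.eq_swap]
      · rintro (rfl | rfl | rfl)
        · right; left; rfl
        · left; rw [Sym2.eq_swap]
        · right; right; rw [Sym2.eq_swap]
  have hsub : ({e, f} : Finset (Sym2 V)) ⊆ S := by
    intro g hg
    rcases Finset.mem_insert.mp hg with rfl | hg'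
    · exact heS
    · rw [Finset.mem_singleton.mp hg']; exact hfS
  exact hS.2 {e, f} hsub hbc

end B
section Char
variable {V : Type*} [LinearOrder V] {G : SimpleGraph V}

lemma isNBC_iff (hpeo : IsPEO G) (S : Finset (Sym2 V)) :
    IsNBC G S ↔ ↑S ⊆ G.edgeSet ∧ ∀ e ∈ S, ∀ f ∈ S, esup e = esup f → e = f :=
  ⟨fun h => ⟨h.1, injOn_of_isNBC hpeo h⟩, fun h => isNBC_of_injOn h.1 h.2⟩

end Char

/-- For a chordal graph with perfect elimination ordering and maximal vertex `v`: every nbc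
set decomposes uniquely as the union of an nbc set of `Γ − v` and at most one edge with
larger endpoint `v`; consequently `N(Γ) = N(Γ − v) · (1 + deg v)`. -/
theorem stmt_13 {V : Type*} [Fintype V] [LinearOrder V] (G : SimpleGraph V)
    [DecidableRel G.Adj] (hchordal : G.IsChordal) (hpeo : IsPEO G)
    (v : V) (hmax : ∀ u : V, u ≤ v) :
    (∀ S : Finset (Sym2 V), IsNBC G S →
        ∃! p : Finset (Sym2 V) × Finset (Sym2 V),
          S = p.1 ∪ p.2 ∧ IsNBC (G.deleteEdges (G.incidenceSet v)) p.1 ∧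
            (p.2 = ∅ ∨ ∃ e : Sym2 V, p.2 = {e} ∧ esup e = v)) ∧
      (nbcFinset G).card = (nbcFinset (G.deleteEdges (G.incidenceSet v))).card *
        (1 + G.degree v) := by
  classical
  set G' := G.deleteEdges (G.incidenceSet v) with hG'
  have hpeo' : IsPEO G' := by
    intro v' u w huv hwv huw h1 h2
    rw [hG', SimpleGraph.deleteEdges_adj] at h1 h2 ⊢
    refine ⟨hpeo v' u w huv hwv huw h1.1 h2.1, ?_⟩
    rw [SimpleGraph.mk'_mem_incidenceSet_iff]
    rintro ⟨-, rfl | rfl⟩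
    · exact h1.2 ((SimpleGraph.mk'_mem_incidenceSet_left_iff _).mpr h1.1)
    · exact h2.2 ((SimpleGraph.mk'_mem_incidenceSet_left_iff _).mpr h2.1)
  have hEsub : G'.edgeSet ⊆ G.edgeSet := by
    rw [hG', SimpleGraph.edgeSet_deleteEdges]; exact Set.diff_subset
  have hmemv : ∀ e ∈ G.edgeSet, (esup e = v ↔ v ∈ e) := by
    intro e _
    exact ⟨fun h => h ▸ esup_mem e, fun h => esup_eq_of_mem_of_le h fun x _ => hmax x⟩
  have hG'mem : ∀ e : Sym2 V, e ∈ G'.edgeSet ↔ e ∈ G.edgeSet ∧ esup e ≠ v := by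
    intro e
    rw [hG', SimpleGraph.edgeSet_deleteEdges, Set.mem_diff]
    constructor
    · rintro ⟨h1, h2⟩; exact ⟨h1, fun h => h2 ⟨h1, (hmemv e h1).mp h⟩⟩
    · rintro ⟨h1, h2⟩; exact ⟨h1, fun hi => h2 ((hmemv e h1).mpr hi.2)⟩
  -- the canonical decomposition
  have hfilter_nbc : ∀ S : Finset (Sym2 V), IsNBC G S →
      IsNBC G' (S.filter fun e => esup e ≠ v) := by
    intro S hS
    obtain ⟨hSe, hSi⟩ := (isNBC_iff hpeo S).mp hS
    rw [isNBC_iff hpeo']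
    refine ⟨?_, ?_⟩
    · intro e he
      rw [Finset.mem_coe, Finset.mem_filter] at he
      exact (hG'mem e).mpr ⟨hSe (Finset.mem_coe.mpr he.1), he.2⟩
    · intro e he f hf h
      exact hSi e (Finset.mem_of_mem_filter _ he) f (Finset.mem_of_mem_filter _ hf) h
  have hfilter_v : ∀ S : Finset (Sym2 V), IsNBC G S →
      (S.filter fun e => esup e = v) = ∅ ∨
        ∃ e, (S.filter fun e => esup e = v) = {e} ∧ esup e = v := by
    intro S hS
    obtain ⟨hSe, hSi⟩ := (isNBC_iff hpeo S).mp hS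
    rcases Finset.eq_empty_or_nonempty (S.filter fun e => esup e = v) with h | ⟨e, he⟩
    · exact Or.inl h
    · right
      obtain ⟨heS, hev⟩ := Finset.mem_filter.mp he
      refine ⟨e, ?_, hev⟩
      ext f
      simp only [Finset.mem_filter, Finset.mem_singleton]
      constructor
      · rintro ⟨hfS, hfv⟩; exact hSi f hfS e heS (by rw [hfv, hev])
      · rintro rfl; exact ⟨heS, hev⟩
  have hsplit : ∀ S : Finset (Sym2 V),
      S = (S.filter fun e => esup e ≠ v) ∪ (S.filter fun e => esup e = v) := by
    intro S
    ext f
    simp only [Finset.mem_union, Finset.mem_filter]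
    by_cases h : esup f = v <;> simp [h] <;> tauto
  have huniq : ∀ S : Finset (Sym2 V), IsNBC G S →
      ∀ p : Finset (Sym2 V) × Finset (Sym2 V),
      (S = p.1 ∪ p.2 ∧ IsNBC G' p.1 ∧ (p.2 = ∅ ∨ ∃ e, p.2 = {e} ∧ esup e = v)) →
      p = (S.filter fun e => esup e ≠ v, S.filter fun e => esup e = v) := by
    rintro S hS p ⟨hu, hp1, hp2⟩
    have h1v : ∀ e ∈ p.1, esup e ≠ v := fun e he =>
      ((hG'mem e).mp (hp1.1 (Finset.mem_coe.mpr he))).2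
    have h2v : ∀ e ∈ p.2, esup e = v := by
      rcases hp2 with h | ⟨e, he, hev⟩
      · simp [h]
      · intro f hf; rw [he, Finset.mem_singleton] at hf; rw [hf]; exact hev
    have e1 : p.1 = S.filter fun e => esup e ≠ v := by
      ext f
      simp only [Finset.mem_filter]
      constructor
      · intro hf; exact ⟨hu ▸ Finset.mem_union_left _ hf, h1v f hf⟩
      · rintro ⟨hfS, hfv⟩
        rw [hu] at hfS
        rcases Finset.mem_union.mp hfS with h | h
        · exact h
        · exact absurd (h2v f h) hfv
    have e2 : p.2 = S.filter fun e => esup e = v := by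
      ext f
      simp only [Finset.mem_filter]
      constructor
      · intro hf; exact ⟨hu ▸ Finset.mem_union_right _ hf, h2v f hf⟩
      · rintro ⟨hfS, hfv⟩
        rw [hu] at hfS
        rcases Finset.mem_union.mp hfS with h | h
        · exact absurd hfv (h1v f h)
        · exact h
    exact Prod.ext e1 e2
  constructor
  · intro S hS
    refine ⟨(S.filter fun e => esup e ≠ v, S.filter fun e => esup e = v),
      ⟨hsplit S, hfilter_nbc S hS, hfilter_v S hS⟩, fun q hq => huniq S hS q hq⟩
  · -- cardinality
    set T : Finset (Finset (Sym2 V)) :=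
      insert ∅ ((G.incidenceFinset v).image fun e => ({e} : Finset (Sym2 V))) with hT
    have hmem_nbc : ∀ (H : SimpleGraph V) (S : Finset (Sym2 V)),
        S ∈ nbcFinset H ↔ IsNBC H S := by
      intro H S
      rw [nbcFinset, Finset.mem_filter]
      simp
    have hunion_nbc : ∀ p : Finset (Sym2 V) × Finset (Sym2 V),
        p ∈ (nbcFinset G') ×ˢ T → IsNBC G (p.1 ∪ p.2) ∧ (∀ e ∈ p.1, esup e ≠ v) ∧
          (∀ e ∈ p.2, esup e = v) := by
      rintro p hp
      rw [Finset.mem_product] at hp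
      have hp1 : IsNBC G' p.1 := (hmem_nbc _ _).mp hp.1
      obtain ⟨h1e, h1i⟩ := (isNBC_iff hpeo' p.1).mp hp1
      have h1v : ∀ e ∈ p.1, esup e ≠ v := fun e he =>
        ((hG'mem e).mp (h1e (Finset.mem_coe.mpr he))).2
      have hp2' : (∀ e ∈ p.2, e ∈ G.edgeSet ∧ esup e = v) ∧
          (∀ e ∈ p.2, ∀ f ∈ p.2, e = f) := by
        have hp2 := hp.2
        rw [hT, Finset.mem_insert] at hp2
        rcases hp2 with h | h
        · rw [h]; simp
        · obtain ⟨g, hg, hgp⟩ := Finset.mem_image.mp h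
          rw [SimpleGraph.mem_incidenceFinset] at hg
          constructor
          · intro e he; rw [← hgp, Finset.mem_singleton] at he; subst he
            exact ⟨hg.1, (hmemv _ hg.1).mpr hg.2⟩
          · intro e he f hf
            rw [← hgp, Finset.mem_singleton] at he hf; rw [he, hf]
      refine ⟨?_, h1v, fun e he => (hp2'.1 e he).2⟩
      apply isNBC_of_injOn
      · intro e he
        rcases Finset.mem_union.mp (Finset.mem_coe.mp he) with h | h
        · exact hEsub (h1e (Finset.mem_coe.mpr h))
        · exact (hp2'.1 e h).1
      · intro e he f hf hef
        rcases Finset.mem_union.mp he with h | h <;> rcases Finset.mem_union.mp hf with h' | h'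
        · exact h1i e h f h' hef
        · exact absurd (hef.trans (hp2'.1 f h').2) (h1v e h)
        · exact absurd (hef.symm.trans (hp2'.1 e h).2) (h1v f h')
        · exact hp2'.2 e h f h'
    have hcard : (nbcFinset G).card = ((nbcFinset G') ×ˢ T).card := by
      refine Finset.card_bij'
        (fun S _ => (S.filter fun e => esup e ≠ v, S.filter fun e => esup e = v))
        (fun p _ => p.1 ∪ p.2) ?_ ?_ ?_ ?_
      · intro S hS
        have hS' := (hmem_nbc _ _).mp hS
        rw [Finset.mem_product]
        refine ⟨(hmem_nbc _ _).mpr (hfilter_nbc S hS'), ?_⟩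
        rcases hfilter_v S hS' with h | ⟨e, he, hev⟩
        · rw [hT, h]; exact Finset.mem_insert_self _ _
        · rw [hT, he]
          refine Finset.mem_insert_of_mem (Finset.mem_image.mpr ⟨e, ?_, rfl⟩)
          have heS : e ∈ S := by
            have : e ∈ S.filter fun e => esup e = v := by rw [he]; exact Finset.mem_singleton_self e
            exact Finset.mem_of_mem_filter _ this
          rw [SimpleGraph.mem_incidenceFinset]
          have heE : e ∈ G.edgeSet := hS'.1 (Finset.mem_coe.mpr heS)
          exact ⟨heE, (hmemv e heE).mp hev⟩
      · intro p hp
        exact (hmem_nbc _ _).mpr (hunion_nbc p hp).1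
      · intro S _
        dsimp only
        exact (hsplit S).symm
      · intro p hp
        obtain ⟨-, h1v, h2v⟩ := hunion_nbc p hp
        have e1 : (p.1 ∪ p.2).filter (fun e => esup e ≠ v) = p.1 := by
          ext f
          simp only [Finset.mem_filter, Finset.mem_union]
          constructor
          · rintro ⟨h | h, hfv⟩
            · exact h
            · exact absurd (h2v f h) hfv
          · intro h; exact ⟨Or.inl h, h1v f h⟩
        have e2 : (p.1 ∪ p.2).filter (fun e => esup e = v) = p.2 := by
          ext f
          simp only [Finset.mem_filter, Finset.mem_union]
          constructor
          · rintro ⟨h | h, hfv⟩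
            · exact absurd hfv (h1v f h)
            · exact h
          · intro h; exact ⟨Or.inr h, h2v f h⟩
        exact Prod.ext e1 e2
    have hTcard : T.card = 1 + G.degree v := by
      have hempty : (∅ : Finset (Sym2 V)) ∉
          (G.incidenceFinset v).image fun e => ({e} : Finset (Sym2 V)) := by
        intro h
        obtain ⟨x, -, hx⟩ := Finset.mem_image.mp h
        exact Finset.singleton_ne_empty x hx
      rw [hT, Finset.card_insert_of_notMem hempty,
        Finset.card_image_of_injective _ Finset.singleton_injective,
        SimpleGraph.card_incidenceFinset_eq_degree, add_comm]
    rw [hcard, Finset.card_product, hTcard]
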